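/- The functions Φ_n(s) = i^n (n+1)! √(2/π) · sinh^{2n+2}(s/2)/sinh^{n+2}(s) satisfy the recurrence Φ_{n+1}(s) = -i Φ_n'(s) - (n(n+1)/4) Φ_{n-1}(s) for all n ≥ 1 and all real s ≠ 0. -/

import Mathlib

/-- `Φ_n(s) = i^n (n+1)! √(2/π) sinh^{2n+2}(s/2)/sinh^{n+2} s`. -/
noncomputable def Phi (n : ℕ) (s : ℝ) : ℂ :=
  Complex.I ^ n * ((Nat.factorial (n + 1)) : ℝ) * (Real.sqrt (2 / Real.pi) : ℂ) *
    ((Real.sinh (s / 2) : ℂ)) ^ (2 * n + 2) / ((Real.sinh s : ℂ)) ^ (n + 2)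

lemma Phi_eq (n : ℕ) : Phi n = fun t : ℝ =>
    (Complex.I ^ n * ((Nat.factorial (n + 1)) : ℝ) * (Real.sqrt (2 / Real.pi) : ℂ)) *
      (Complex.sinh ((t : ℂ) / 2) ^ (2 * n + 2) / Complex.sinh (t : ℂ) ^ (n + 2)) := by
  funext t
  simp only [Phi, Complex.ofReal_sinh, Complex.ofReal_div, Complex.ofReal_ofNat]
  ring

/-- The functions `Φ_n` satisfy `Φ_{n+1}(s) = -i Φ_n'(s) - (n(n+1)/4) Φ_{n-1}(s)`. -/
theorem Phi_recurrence (n : ℕ) (hn : 1 ≤ n) (s : ℝ) (hs : s ≠ 0) :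
    Phi (n + 1) s = -Complex.I * deriv (Phi n) s
      - ((n : ℂ) * ((n : ℂ) + 1) / 4) * Phi (n - 1) s := by
  obtain ⟨m, rfl⟩ : ∃ m, n = m + 1 := ⟨n - 1, (Nat.succ_pred_eq_of_pos hn).symm⟩
  clear hn
  have hsr : Real.sinh s ≠ 0 := fun h => hs (Real.sinh_eq_zero.mp h)
  have hsc : Complex.sinh (s : ℂ) ≠ 0 := by
    rw [← Complex.ofReal_sinh]; exact_mod_cast hsr
  have hhalf : ((s : ℂ) / 2) = ((s / 2 : ℝ) : ℂ) := by push_cast; ring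
  have ha : Complex.sinh ((s : ℂ) / 2) ≠ 0 := by
    rw [hhalf, ← Complex.ofReal_sinh]
    exact_mod_cast fun h => hs (by
      have := Real.sinh_eq_zero.mp h; linarith)
  have hb : Complex.cosh ((s : ℂ) / 2) ≠ 0 := by
    rw [hhalf, ← Complex.ofReal_cosh]
    exact_mod_cast (Real.cosh_pos (s / 2)).ne'
  have hs2 : Complex.sinh (s : ℂ) =
      2 * Complex.sinh ((s : ℂ) / 2) * Complex.cosh ((s : ℂ) / 2) := by
    have h := Complex.sinh_two_mul ((s : ℂ) / 2)
    rw [show 2 * ((s : ℂ) / 2) = (s : ℂ) by ring] at h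
    exact h
  have hb2 : Complex.cosh ((s : ℂ) / 2) ^ 2 = Complex.sinh ((s : ℂ) / 2) ^ 2 + 1 :=
    Complex.cosh_sq _
  have hc2 : Complex.cosh (s : ℂ) = 2 * Complex.cosh ((s : ℂ) / 2) ^ 2 - 1 := by
    have h := Complex.cosh_two_mul ((s : ℂ) / 2)
    rw [show 2 * ((s : ℂ) / 2) = (s : ℂ) by ring] at h
    rw [h]
    linear_combination -hb2
  have hS2 : Complex.sinh (s : ℂ) ^ 2 =
      4 * Complex.sinh ((s : ℂ) / 2) ^ 2 * (Complex.sinh ((s : ℂ) / 2) ^ 2 + 1) := by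
    rw [hs2]
    linear_combination (4 * Complex.sinh ((s : ℂ) / 2) ^ 2) * hb2
  -- derivative of numerator
  have hnum : HasDerivAt (fun z : ℂ => Complex.sinh (z / 2) ^ (2 * (m + 1) + 2))
      ((2 * (m + 1) + 2 : ℕ) * Complex.sinh ((s : ℂ) / 2) ^ (2 * (m + 1) + 1) *
        (Complex.cosh ((s : ℂ) / 2) * (1 / 2))) (s : ℂ) := by
    have h0 : HasDerivAt (fun z : ℂ => z / 2) (1 / 2) (s : ℂ) := by
      simpa using (hasDerivAt_id (s : ℂ)).div_const 2
    have h1 : HasDerivAt (fun z : ℂ => Complex.sinh (z / 2))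
        (Complex.cosh ((s : ℂ) / 2) * (1 / 2)) (s : ℂ) :=
      (Complex.hasDerivAt_sinh _).comp _ h0
    simpa using h1.fun_pow (2 * (m + 1) + 2)
  have hden : HasDerivAt (fun z : ℂ => Complex.sinh z ^ (m + 1 + 2))
      ((m + 1 + 2 : ℕ) * Complex.sinh (s : ℂ) ^ (m + 1 + 1) * Complex.cosh (s : ℂ)) (s : ℂ) := by
    simpa using (Complex.hasDerivAt_sinh (s : ℂ)).fun_pow (m + 1 + 2)
  have hdenne : Complex.sinh (s : ℂ) ^ (m + 1 + 2) ≠ 0 := pow_ne_zero _ hsc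
  have hq := (hnum.div hden hdenne).comp_ofReal
  set C : ℂ := Complex.I ^ (m + 1) * ((Nat.factorial (m + 1 + 1)) : ℝ) *
    (Real.sqrt (2 / Real.pi) : ℂ) with hC
  have hderiv : deriv (Phi (m + 1)) s =
      C * (((2 * (m + 1) + 2 : ℕ) * Complex.sinh ((s : ℂ) / 2) ^ (2 * (m + 1) + 1) *
        (Complex.cosh ((s : ℂ) / 2) * (1 / 2)) * Complex.sinh (s : ℂ) ^ (m + 1 + 2) -
        Complex.sinh ((s : ℂ) / 2) ^ (2 * (m + 1) + 2) *
        ((m + 1 + 2 : ℕ) * Complex.sinh (s : ℂ) ^ (m + 1 + 1) * Complex.cosh (s : ℂ))) /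
        (Complex.sinh (s : ℂ) ^ (m + 1 + 2)) ^ 2) := by
    rw [Phi_eq]
    exact (hq.const_mul C).deriv
  -- key pointwise identity
  have hkey : ((m : ℂ) + 2) * Complex.cosh ((s : ℂ) / 2) * Complex.sinh (s : ℂ)
      - ((m : ℂ) + 3) * Complex.sinh ((s : ℂ) / 2) * Complex.cosh (s : ℂ)
      = Complex.sinh ((s : ℂ) / 2) * (((m : ℂ) + 1) - 2 * Complex.sinh ((s : ℂ) / 2) ^ 2) := by
    rw [hs2, hc2]
    linear_combination (-2 * Complex.sinh ((s : ℂ) / 2)) * hb2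
  -- simplified derivative
  have hA : deriv (Phi (m + 1)) s =
      C * ((((m : ℂ) + 1) - 2 * Complex.sinh ((s : ℂ) / 2) ^ 2) *
        Complex.sinh ((s : ℂ) / 2) ^ (2 * (m + 1) + 2)) / Complex.sinh (s : ℂ) ^ (m + 1 + 3) := by
    rw [hderiv, ← mul_div_assoc,
      div_eq_div_iff (pow_ne_zero 2 hdenne) (pow_ne_zero _ hsc)]
    push_cast
    linear_combination (C * Complex.sinh ((s : ℂ) / 2) ^ (2 * m + 3) *
      Complex.sinh (s : ℂ) ^ (2 * m + 6)) * hkey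
  have hcne : (4 * Complex.sinh ((s : ℂ) / 2) ^ 2 * (Complex.sinh ((s : ℂ) / 2) ^ 2 + 1)) ≠ 0 := by
    rw [← hS2]; exact pow_ne_zero 2 hsc
  have ht3 : Complex.sinh ((s : ℂ) / 2) ^ (2 * m + 2) / Complex.sinh (s : ℂ) ^ (m + 2)
      = Complex.sinh ((s : ℂ) / 2) ^ (2 * m + 2) *
          (4 * Complex.sinh ((s : ℂ) / 2) ^ 2 * (Complex.sinh ((s : ℂ) / 2) ^ 2 + 1)) /
        Complex.sinh (s : ℂ) ^ (m + 1 + 3) := by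
    have hsplit : Complex.sinh (s : ℂ) ^ (m + 1 + 3) = Complex.sinh (s : ℂ) ^ (m + 2) *
        (4 * Complex.sinh ((s : ℂ) / 2) ^ 2 * (Complex.sinh ((s : ℂ) / 2) ^ 2 + 1)) := by
      rw [show m + 1 + 3 = (m + 2) + 2 from by omega, pow_add, hS2]
    rw [hsplit]
    exact (mul_div_mul_right _ _ hcne).symm
  have hA' : deriv (Phi (m + 1)) s = Complex.I *
      ((Complex.I ^ m * ((Nat.factorial (m + 1 + 1)) : ℝ) * (Real.sqrt (2 / Real.pi) : ℂ)) *
        ((((m : ℂ) + 1) - 2 * Complex.sinh ((s : ℂ) / 2) ^ 2) *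
          Complex.sinh ((s : ℂ) / 2) ^ (2 * (m + 1) + 2)) / Complex.sinh (s : ℂ) ^ (m + 1 + 3)) := by
    rw [hA, hC]
    ring
  have hneg : ∀ w : ℂ, -Complex.I * (Complex.I * w) = w := fun w => by
    rw [← mul_assoc, neg_mul, Complex.I_mul_I, neg_neg, one_mul]
  have hI2 : Complex.I ^ (m + 1 + 1) = -Complex.I ^ m := by
    rw [pow_succ, pow_succ, mul_assoc, Complex.I_mul_I, mul_neg_one]
  rw [hA', hneg]
  simp only [Nat.add_sub_cancel, Phi_eq]
  rw [ht3, show m + 1 + 1 + 2 = m + 1 + 3 from by omega, hI2]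
  have hD : Complex.sinh (s : ℂ) ^ (m + 1 + 3) ≠ 0 := pow_ne_zero _ hsc
  field_simp [hD]
  push_cast [Nat.factorial_succ]
  ring
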